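/- Fix an integer p ≥ 2, an integer N ≥ 2, and positive integers a_1, ..., a_N. For a tuple I = (i_1, ..., i_r) ∈ {1, ..., N}^r define ν(I) = Σ_{j=1}^r p^{i_1 + ⋯ + i_{j-1}} · a_{i_j} (with the empty sum in the exponent equal to 0 for j = 1). If I = (i_1, ..., i_r) minimizes ν over all tuples in {1, ..., N}^r, then i_1 ≤ i_2 ≤ ⋯ ≤ i_r and a_{i_1} ≥ a_{i_2} ≥ ⋯ ≥ a_{i_r}. -/

import Mathlib

/-- The valuation `ν(I) = ∑_{j=1}^r p^(i_1 + ⋯ + i_{j-1}) · a_{i_j}` of a tuple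
`I ∈ {1,…,N}^r`, where the entry `I j : Fin N` represents the value `(I j) + 1`. -/
def tupleVal (p : ℕ) {N r : ℕ} (a : Fin N → ℕ) (I : Fin r → Fin N) : ℕ :=
  ∑ j : Fin r, p ^ (∑ l ∈ Finset.Iio j, ((I l : ℕ) + 1)) * a (I j)

lemma key_lemma (p N r : ℕ) (hp : 1 ≤ p) (a : Fin N → ℕ)
    (I : Fin r → Fin N)
    (hmin : ∀ J : Fin r → Fin N, tupleVal p a I ≤ tupleVal p a J)
    (j k : Fin r) (hk : (k : ℕ) = (j : ℕ) + 1) (c : Fin N)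
    (hcj : (c : ℕ) ≤ (I j : ℕ)) (hck : (c : ℕ) ≤ (I k : ℕ)) :
    a (I j) + p ^ ((I j : ℕ) + 1) * a (I k)
      ≤ a c + p ^ ((c : ℕ) + 1) * a c := by
  classical
  have hjk : j ≠ k := by
    intro h; rw [h] at hk; omega
  set J : Fin r → Fin N := Function.update (Function.update I j c) k c with hJ
  have hJj : J j = c := by
    simp [hJ, Function.update_of_ne hjk, Function.update_self]
  have hJk : J k = c := by simp [hJ, Function.update_self]
  have hJl : ∀ l, l ≠ j → l ≠ k → J l = I l := by
    intro l hlj hlk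
    simp [hJ, Function.update_of_ne hlk, Function.update_of_ne hlj]
  have hJle : ∀ l, (J l : ℕ) ≤ (I l : ℕ) := by
    intro l
    by_cases h1 : l = j
    · subst h1; rw [hJj]; exact hcj
    · by_cases h2 : l = k
      · subst h2; rw [hJk]; exact hck
      · rw [hJl l h1 h2]
  -- exponents
  set e : (Fin r → Fin N) → Fin r → ℕ :=
    fun f l => ∑ m ∈ Finset.Iio l, ((f m : ℕ) + 1) with he
  have hexp : ∀ l, e J l ≤ e I l := by
    intro l
    exact Finset.sum_le_sum (fun m _ => by have := hJle m; omega)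
  have hexpj : e J j = e I j := by
    refine Finset.sum_congr rfl (fun m hm => ?_)
    have hm' : m < j := Finset.mem_Iio.mp hm
    have hmj : m ≠ j := ne_of_lt hm'
    have hmk : m ≠ k := by
      intro h; subst h
      have := hm'.le; rw [Fin.le_def] at this; omega
    rw [hJl m hmj hmk]
  have hIiok : Finset.Iio k = insert j (Finset.Iio j) := by
    ext m
    simp only [Finset.mem_Iio, Finset.mem_insert, Fin.lt_def, Fin.ext_iff]
    omega
  have hjnot : j ∉ Finset.Iio j := by simp
  have hexpkI : e I k = e I j + ((I j : ℕ) + 1) := by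
    rw [he]; simp only []
    rw [hIiok, Finset.sum_insert hjnot]; ring
  have hexpkJ : e J k = e I j + ((c : ℕ) + 1) := by
    rw [he]; simp only []
    rw [hIiok, Finset.sum_insert hjnot]
    have : ∑ m ∈ Finset.Iio j, ((J m : ℕ) + 1) = e I j := hexpj
    rw [hJj, this]; ring
  -- terms
  set tI : Fin r → ℕ := fun l => p ^ (e I l) * a (I l) with htI
  set tJ : Fin r → ℕ := fun l => p ^ (e J l) * a (J l) with htJ
  have htupI : tupleVal p a I = ∑ l, tI l := rfl
  have htupJ : tupleVal p a J = ∑ l, tJ l := rfl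
  have htail : ∀ l ∈ Finset.univ \ ({j, k} : Finset (Fin r)), tJ l ≤ tI l := by
    intro l hl
    simp only [Finset.mem_sdiff, Finset.mem_insert, Finset.mem_singleton] at hl
    push_neg at hl
    rw [htJ, htI]
    simp only []
    rw [hJl l hl.2.1 hl.2.2]
    exact Nat.mul_le_mul_right _ (Nat.pow_le_pow_right hp (hexp l))
  have hsub : ({j, k} : Finset (Fin r)) ⊆ Finset.univ := Finset.subset_univ _
  have hpair : ∀ f : Fin r → ℕ, ∑ l ∈ ({j, k} : Finset (Fin r)), f l = f j + f k :=
    fun f => Finset.sum_pair hjk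
  have hsplit : ∀ f : Fin r → ℕ,
      ∑ l, f l = (∑ l ∈ Finset.univ \ ({j, k} : Finset (Fin r)), f l) + (f j + f k) := by
    intro f
    rw [← hpair f, Finset.sum_sdiff hsub]
  have h1 : tupleVal p a I ≤ tupleVal p a J := hmin J
  rw [htupI, htupJ, hsplit tI, hsplit tJ] at h1
  have h2 : ∑ l ∈ Finset.univ \ ({j, k} : Finset (Fin r)), tJ l
      ≤ ∑ l ∈ Finset.univ \ ({j, k} : Finset (Fin r)), tI l :=
    Finset.sum_le_sum htail
  have h3 : tI j + tI k ≤ tJ j + tJ k := by omega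
  rw [htI, htJ] at h3
  simp only [] at h3
  have hw : ∀ u v : ℕ, p ^ (e I j + u) * v = p ^ (e I j) * (p ^ u * v) := by
    intro u v; rw [pow_add, mul_assoc]
  rw [hexpkI, hexpkJ, hexpj, hJj, hJk, hw, hw, ← Nat.mul_add, ← Nat.mul_add] at h3
  have hpos : 0 < p ^ (e I j) := Nat.pow_pos hp
  exact Nat.le_of_mul_le_mul_left h3 hpos

lemma adjacent_step (p N r : ℕ) (hp : 2 ≤ p) (a : Fin N → ℕ) (ha : ∀ i, 0 < a i)
    (I : Fin r → Fin N)
    (hmin : ∀ J : Fin r → Fin N, tupleVal p a I ≤ tupleVal p a J)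
    (j k : Fin r) (hk : (k : ℕ) = (j : ℕ) + 1) :
    (I j : ℕ) ≤ (I k : ℕ) ∧ a (I k) ≤ a (I j) := by
  have hp1 : 1 ≤ p := by omega
  have hxy : (I j : ℕ) ≤ (I k : ℕ) := by
    by_contra hlt
    push_neg at hlt
    have hkey := key_lemma p N r hp1 a I hmin j k hk (I k) hlt.le le_rfl
    set x := (I j : ℕ) with hx
    set y := (I k : ℕ) with hy
    have hq : p ^ (y + 1) ≤ p ^ x := Nat.pow_le_pow_right hp1 (by omega)
    have hq2 : p ^ x * p ≤ p ^ (x + 1) := by rw [pow_succ]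
    have hqy : 2 ≤ p ^ (y + 1) := le_trans hp (Nat.le_self_pow (by omega) p)
    have hax : 1 ≤ a (I j) := ha _
    have hay : 1 ≤ a (I k) := ha _
    have hpx1 : p ^ (y + 1) * p ≤ p ^ (x + 1) := by
      calc p ^ (y + 1) * p ≤ p ^ x * p := Nat.mul_le_mul_right _ hq
        _ ≤ p ^ (x + 1) := hq2
    have hA : p ^ (y + 1) * p * a (I k) ≤ p ^ (x + 1) * a (I k) :=
      Nat.mul_le_mul_right _ hpx1
    have hB : 2 * (p ^ (y + 1) * a (I k)) ≤ p ^ (y + 1) * p * a (I k) := by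
      have h' : p ^ (y + 1) * 2 ≤ p ^ (y + 1) * p := Nat.mul_le_mul_left _ hp
      calc 2 * (p ^ (y + 1) * a (I k)) = p ^ (y + 1) * 2 * a (I k) := by ring
        _ ≤ p ^ (y + 1) * p * a (I k) := Nat.mul_le_mul_right _ h'
    have hC : 2 * a (I k) ≤ p ^ (y + 1) * a (I k) := Nat.mul_le_mul_right _ hqy
    linarith [hkey, hA, hB, hC, hax, hay]
  refine ⟨hxy, ?_⟩
  have hkey := key_lemma p N r hp1 a I hmin j k hk (I j) le_rfl hxy
  have hpos : 0 < p ^ ((I j : ℕ) + 1) := Nat.pow_pos (by omega)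
  have h3 : p ^ ((I j : ℕ) + 1) * a (I k) ≤ p ^ ((I j : ℕ) + 1) * a (I j) := by omega
  exact Nat.le_of_mul_le_mul_left h3 hpos

theorem minimizer_monotone_antitone
    (p N r : ℕ) (hp : 2 ≤ p) (hN : 2 ≤ N) (hr : 1 ≤ r)
    (a : Fin N → ℕ) (ha : ∀ i, 0 < a i)
    (I : Fin r → Fin N)
    (hmin : ∀ J : Fin r → Fin N, tupleVal p a I ≤ tupleVal p a J) :
    Monotone I ∧ (∀ j l : Fin r, j ≤ l → a (I l) ≤ a (I j)) := by
  have claim : ∀ n : ℕ, ∀ j l : Fin r, (l : ℕ) = (j : ℕ) + n →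
      (I j : ℕ) ≤ (I l : ℕ) ∧ a (I l) ≤ a (I j) := by
    intro n
    induction n with
    | zero =>
      intro j l hl
      have : j = l := Fin.ext (by omega)
      subst this
      exact ⟨le_rfl, le_rfl⟩
    | succ n ih =>
      intro j l hl
      have hm : (j : ℕ) + n < r := by have := l.isLt; omega
      set m : Fin r := ⟨(j : ℕ) + n, hm⟩ with hmdef
      have h1 := ih j m rfl
      have h2 := adjacent_step p N r hp a ha I hmin m l (by simp [hmdef]; omega)
      exact ⟨le_trans h1.1 h2.1, le_trans h2.2 h1.2⟩
  constructor
  · intro j l hjl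
    rw [Fin.le_def] at hjl ⊢
    exact (claim ((l : ℕ) - (j : ℕ)) j l (by omega)).1
  · intro j l hjl
    rw [Fin.le_def] at hjl
    exact (claim ((l : ℕ) - (j : ℕ)) j l (by omega)).2
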